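/- For the n-cycle C_n with n odd, two agents starting at distinct uniformly random vertices and using the same deterministic single-step strategy f (f(x) ∈ {x±1} mod n): the maximum success probability ∑_{x≠y}[f(x)=f(y)] / (n(n−1)) equals 1/n. -/

import Mathlib

open Finset

section aux
variable {n : ℕ} [NeZero n]

lemma aux_two_ne_zero (hn : 3 ≤ n) : (2 : ZMod n) ≠ 0 := by
  intro h
  have h' : ((2:ℕ) : ZMod n) = 0 := by exact_mod_cast h
  rw [ZMod.natCast_eq_zero_iff] at h'
  have := Nat.le_of_dvd (by norm_num) h'
  omega

lemma aux_card_le (hn : 3 ≤ n) (hodd : Odd n) (f : ZMod n → ZMod n)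
    (hf : ∀ x, f x = x - 1 ∨ f x = x + 1) :
    (Finset.univ.filter (fun p : ZMod n × ZMod n => p.1 ≠ p.2 ∧ f p.1 = f p.2)).card ≤ n - 1 := by
  have h2 : (2 : ZMod n) ≠ 0 := aux_two_ne_zero hn
  set S := Finset.univ.filter (fun p : ZMod n × ZMod n => p.1 ≠ p.2 ∧ f p.1 = f p.2) with hS
  set Sp := S.filter (fun p => f p.1 = p.1 + 1) with hSp
  set Sm := S.filter (fun p => ¬ f p.1 = p.1 + 1) with hSm
  have hsplit : Sp.card + Sm.card = S.card :=
    Finset.card_filter_add_card_filter_not _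
  have hmemp : ∀ p : ZMod n × ZMod n, p ∈ Sp →
      p.1 ≠ p.2 ∧ f p.1 = p.1 + 1 ∧ p.2 = p.1 + 2 ∧ f p.2 = p.2 - 1 := by
    intro p hp
    simp only [hSp, hS, Finset.mem_filter, Finset.mem_univ, true_and] at hp
    obtain ⟨⟨hne, hfe⟩, hplus⟩ := hp
    rcases hf p.2 with h | h
    · refine ⟨hne, hplus, by linear_combination -h - hfe + hplus, h⟩
    · exact absurd (by linear_combination -hplus + hfe + h : p.1 = p.2) hne
  have hmemm : ∀ p : ZMod n × ZMod n, p ∈ Sm →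
      p.1 ≠ p.2 ∧ f p.1 = p.1 - 1 ∧ p.2 = p.1 - 2 ∧ f p.2 = p.2 + 1 := by
    intro p hp
    simp only [Finset.mem_coe, hSm, hS, Finset.mem_filter, Finset.mem_univ, true_and] at hp
    obtain ⟨⟨hne, hfe⟩, hnp⟩ := hp
    have hminus : f p.1 = p.1 - 1 := (hf p.1).resolve_right hnp
    rcases hf p.2 with h | h
    · exact absurd (by linear_combination -hminus + hfe + h : p.1 = p.2) hne
    · exact ⟨hne, hminus, by linear_combination -h - hfe + hminus, h⟩
  have hcardpm : Sp.card = Sm.card := by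
    apply Finset.card_nbij' (fun p => p.swap) (fun p => p.swap)
    · intro p hp
      obtain ⟨hne, h1, h2', h3⟩ := hmemp p hp
      simp only [Finset.mem_coe, hSm, hS, Finset.mem_filter, Finset.mem_univ, true_and, Prod.fst_swap,
        Prod.snd_swap]
      refine ⟨⟨fun h => hne h.symm, by linear_combination h3 - h1 + h2'⟩, ?_⟩
      · rw [h3]
        intro hcon
        exact h2 (by linear_combination -hcon)
    · intro p hp
      obtain ⟨hne, h1, h2', h3⟩ := hmemm p hp
      simp only [Finset.mem_coe, hSp, hS, Finset.mem_filter, Finset.mem_univ, true_and, Prod.fst_swap,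
        Prod.snd_swap]
      exact ⟨⟨fun h => hne h.symm, by linear_combination h3 - h1 + h2'⟩, h3⟩
    · intro p _; exact Prod.swap_swap p
    · intro p _; exact Prod.swap_swap p

  set B := Finset.univ.filter (fun x : ZMod n => f x = x + 1) with hB
  set Bc := Finset.univ.filter (fun x : ZMod n => ¬ f x = x + 1) with hBc
  have hBsplit : B.card + Bc.card = n := by
    rw [hB, hBc, Finset.card_filter_add_card_filter_not, Finset.card_univ, ZMod.card]
  have hle1 : Sp.card ≤ B.card := by
    apply Finset.card_le_card_of_injOn (fun p => p.1)
    · intro p hp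
      obtain ⟨_, h1, _, _⟩ := hmemp p hp
      simp only [Finset.mem_coe, hB, Finset.mem_filter, Finset.mem_univ, true_and]
      exact h1
    · intro p hp q hq h
      obtain ⟨_, _, h2', _⟩ := hmemp p (by simpa using hp)
      obtain ⟨_, _, h2q, _⟩ := hmemp q (by simpa using hq)
      have h' : p.1 = q.1 := h
      have : p.2 = q.2 := by rw [h2', h2q, h']
      exact Prod.ext h' this
  have hle2 : Sp.card ≤ Bc.card := by
    apply Finset.card_le_card_of_injOn (fun p => p.2)
    · intro p hp
      obtain ⟨_, _, _, h3⟩ := hmemp p hp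
      simp only [Finset.mem_coe, hBc, Finset.mem_filter, Finset.mem_univ, true_and]
      intro hcon
      have : (2 : ZMod n) = 0 := by linear_combination h3 - hcon
      exact h2 this
    · intro p hp q hq h
      obtain ⟨_, _, h2', _⟩ := hmemp p (by simpa using hp)
      obtain ⟨_, _, h2q, _⟩ := hmemp q (by simpa using hq)
      have h' : p.2 = q.2 := h
      have : p.1 = q.1 := by
        have hh := h2'.symm.trans (h'.trans h2q)
        linear_combination hh
      exact Prod.ext this h'
  obtain ⟨t, ht⟩ := hodd
  omega

lemma aux_exists (hn : 3 ≤ n) (hodd : Odd n) :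
    ∃ f : ZMod n → ZMod n, (∀ x, f x = x - 1 ∨ f x = x + 1) ∧
      (Finset.univ.filter (fun p : ZMod n × ZMod n => p.1 ≠ p.2 ∧ f p.1 = f p.2)).card
        = n - 1 := by
  have h2 : (2 : ZMod n) ≠ 0 := aux_two_ne_zero hn
  set m : ZMod n := (((n+1)/2 : ℕ) : ZMod n) with hm
  have h2m : (2 : ZMod n) * m = 1 := by
    have hdvd : 2 * ((n+1)/2) = n + 1 := by
      obtain ⟨t, ht⟩ := hodd; omega
    calc (2:ZMod n) * m = ((2 * ((n+1)/2) : ℕ) : ZMod n) := by rw [hm]; push_cast; ring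
    _ = ((n + 1 : ℕ) : ZMod n) := by rw [hdvd]
    _ = 1 := by push_cast [ZMod.natCast_self]; ring
  have hm2 : m * (2 : ZMod n) = 1 := by rw [mul_comm]; exact h2m
  set f : ZMod n → ZMod n := fun x => if Even ((m * x).val) then x + 1 else x - 1 with hfdef
  have hf : ∀ x, f x = x - 1 ∨ f x = x + 1 := by
    intro x
    by_cases h : Even ((m * x).val) <;> simp [hfdef, h]
  refine ⟨f, hf, ?_⟩
  have hidx : ∀ k : ℕ, k < n → (m * (2 * (k : ZMod n))).val = k := by
    intro k hk
    rw [← mul_assoc, hm2, one_mul, ZMod.val_cast_of_lt hk]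
  have hx : ∀ x : ZMod n, x = 2 * (((m * x).val : ℕ) : ZMod n) := by
    intro x
    rw [ZMod.natCast_zmod_val, ← mul_assoc, h2m, one_mul]
  set φ : ℕ → ZMod n × ZMod n :=
    fun k => (2 * (k : ZMod n),
      if Even k then 2 * (k : ZMod n) + 2 else 2 * (k : ZMod n) - 2) with hφ
  have hSeq : Finset.univ.filter (fun p : ZMod n × ZMod n => p.1 ≠ p.2 ∧ f p.1 = f p.2)
      = (Finset.range (n-1)).image φ := by
    ext p
    simp only [Finset.mem_filter, Finset.mem_univ, true_and, Finset.mem_image,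
      Finset.mem_range]
    constructor
    · rintro ⟨hne, hfeq⟩
      set k := (m * p.1).val with hk
      have hkn : k < n := ZMod.val_lt _
      have hp1 : p.1 = 2 * (k : ZMod n) := hx p.1
      have hc : (k : ZMod n) = m * p.1 := ZMod.natCast_zmod_val _
      rw [hfdef] at hfeq
      simp only at hfeq
      by_cases hkE : Even k
      · rw [if_pos (hkE : Even ((m * p.1).val))] at hfeq
        by_cases hyE : Even ((m * p.2).val)
        · rw [if_pos hyE] at hfeq
          exact absurd (by linear_combination hfeq) hne
        · rw [if_neg hyE] at hfeq
          have hp2 : p.2 = p.1 + 2 := by linear_combination -hfeq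
          have hmp2 : m * p.2 = (k : ZMod n) + 1 := by
            rw [hp2, mul_add, hm2, ← hc]
          have hkne : k ≠ n - 1 := by
            intro hcon
            apply hyE
            have hz : m * p.2 = ((n : ℕ) : ZMod n) := by
              rw [hmp2, hcon]
              push_cast [Nat.cast_sub (by omega : 1 ≤ n)]
              ring
            rw [hz, ZMod.natCast_self, ZMod.val_zero]
            exact Even.zero
          refine ⟨k, by omega, ?_⟩
          rw [hφ]
          simp only [if_pos hkE]
          refine Prod.ext hp1.symm ?_
          rw [hp2, hp1]
      · rw [if_neg (hkE : ¬ Even ((m * p.1).val))] at hfeq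
        by_cases hyE : Even ((m * p.2).val)
        · rw [if_pos hyE] at hfeq
          have hp2 : p.2 = p.1 - 2 := by linear_combination -hfeq
          have hkne : k ≠ n - 1 ∧ 1 ≤ k := by
            rw [Nat.not_even_iff_odd] at hkE
            obtain ⟨t, ht⟩ := hkE
            obtain ⟨s, hs⟩ := hodd
            omega
          refine ⟨k, by omega, ?_⟩
          rw [hφ]
          simp only [if_neg hkE]
          refine Prod.ext hp1.symm ?_
          rw [hp2, hp1]
        · rw [if_neg hyE] at hfeq
          exact absurd (by linear_combination hfeq) hne
    · rintro ⟨k, hk, rfl⟩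
      have hkn : k < n := by omega
      have hvk : (m * (2 * (k : ZMod n))).val = k := hidx k hkn
      by_cases hkE : Even k
      · rw [hφ]
        simp only [if_pos hkE]
        have hsucc : 2 * (k : ZMod n) + 2 = 2 * (((k+1 : ℕ)) : ZMod n) := by
          push_cast; ring
        have hvk1 : (m * (2 * (k : ZMod n) + 2)).val = k + 1 := by
          rw [hsucc]; exact hidx (k+1) (by omega)
        have hE1 : Even ((m * (2 * (k : ZMod n))).val) := by rw [hvk]; exact hkE
        have hE2 : ¬ Even ((m * (2 * (k : ZMod n) + 2)).val) := by
          rw [hvk1]; simpa [Nat.even_add_one] using hkE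
        constructor
        · intro hcon
          exact h2 (by linear_combination -hcon)
        · rw [hfdef]
          simp only
          rw [if_pos hE1, if_neg hE2]
          ring
      · rw [hφ]
        simp only [if_neg hkE]
        have hkOdd : Odd k := Nat.not_even_iff_odd.mp hkE
        obtain ⟨t, ht⟩ := hkOdd
        have hk1 : 1 ≤ k := by omega
        have hpred : 2 * (k : ZMod n) - 2 = 2 * (((k-1 : ℕ)) : ZMod n) := by
          push_cast [Nat.cast_sub hk1]; ring
        have hvk1 : (m * (2 * (k : ZMod n) - 2)).val = k - 1 := by
          rw [hpred]; exact hidx (k-1) (by omega)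
        have hE1 : ¬ Even ((m * (2 * (k : ZMod n))).val) := by rw [hvk]; exact hkE
        have hE2 : Even ((m * (2 * (k : ZMod n) - 2)).val) := by
          rw [hvk1]; exact ⟨t, by omega⟩
        constructor
        · intro hcon
          exact h2 (by linear_combination hcon)
        · rw [hfdef]
          simp only
          rw [if_neg hE1, if_pos hE2]
          ring
  have hinj : Set.InjOn φ (Finset.range (n-1)) := by
    intro a ha b hb hab
    simp only [Finset.coe_range, Set.mem_Iio] at ha hb
    have h1 : (2 : ZMod n) * a = 2 * b := congrArg Prod.fst hab
    have h3 := congrArg (fun z => (m * z).val) h1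
    simpa [hidx a (by omega), hidx b (by omega)] using h3
  rw [hSeq, Finset.card_image_of_injOn hinj, Finset.card_range]

end aux

theorem stmt_10 (n : ℕ) [NeZero n] (hn : 3 ≤ n) (hodd : Odd n) :
    IsGreatest
      {w : ℝ | ∃ f : ZMod n → ZMod n,
        (∀ x, f x = x - 1 ∨ f x = x + 1) ∧
        w = ((Finset.univ.filter
              (fun p : ZMod n × ZMod n => p.1 ≠ p.2 ∧ f p.1 = f p.2)).card : ℝ) /
            ((n : ℝ) * ((n : ℝ) - 1))}
      (1 / (n : ℝ)) := by
  have h3 : (3:ℝ) ≤ (n:ℝ) := by exact_mod_cast hn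
  have hn0 : (n:ℝ) ≠ 0 := by linarith
  have hn1 : (n:ℝ) - 1 ≠ 0 := by linarith
  constructor
  · obtain ⟨f, hf, hcard⟩ := aux_exists hn hodd
    refine ⟨f, hf, ?_⟩
    rw [hcard]
    have hcast : ((n - 1 : ℕ) : ℝ) = (n:ℝ) - 1 := by
      rw [Nat.cast_sub (by omega : 1 ≤ n)]; norm_num
    rw [hcast]
    field_simp
  · rintro w ⟨f, hf, rfl⟩
    have hle := aux_card_le hn hodd f hf
    have hc : (((Finset.univ.filter
        (fun p : ZMod n × ZMod n => p.1 ≠ p.2 ∧ f p.1 = f p.2)).card : ℕ) : ℝ)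
        ≤ (n:ℝ) - 1 := by
      have h' := (Nat.cast_le (α := ℝ)).mpr hle
      rwa [Nat.cast_sub (by omega : 1 ≤ n), Nat.cast_one] at h'
    rw [div_le_div_iff₀ (by nlinarith) (by nlinarith)]
    nlinarith
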